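/- (Faithfulness criterion 1) Let G be a directed mixed graph over micro-variables X with distribution P_X of positive density, and let P be a partition of its nodes. Assume: (i) (G, P_X) is σ-Markovian and σ-faithful; (ii) every strongly connected component of G is contained in some group of P; (iii) for every adjacent pair of edges e = (W,Y), e' = (Y,Z) of co(G,P) and every y ∈ bd_e(Y) there exists y' ∈ bd_{e'}(Y) with sc_G(y) = sc_G(y'). Then (co(G,P), P_X) is σ-faithful and co(G,P) is acyclic. -/

import Mathlib

/-! ## Mixed graphs -/

/-- A mixed graph: directed, bidirected and undirected edges, no self-edges. -/
structure MixedGraph (V : Type) where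
  dir : V → V → Prop
  bidir : V → V → Prop
  undir : V → V → Prop
  bidir_symm : ∀ {a b}, bidir a b → bidir b a
  undir_symm : ∀ {a b}, undir a b → undir b a
  dir_irrefl : ∀ a, ¬ dir a a
  bidir_irrefl : ∀ a, ¬ bidir a a
  undir_irrefl : ∀ a, ¬ undir a a

namespace MixedGraph

variable {V I : Type}

/-- A directed mixed graph is a mixed graph without undirected edges. -/
def IsDMG (G : MixedGraph V) : Prop := ∀ a b, ¬ G.undir a b

/-- `a` and `b` lie in the same strongly connected component: there are directed
paths between them in both directions. -/
def Strongly (G : MixedGraph V) (a b : V) : Prop :=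
  Relation.ReflTransGen G.dir a b ∧ Relation.ReflTransGen G.dir b a

lemma Strongly.refl (G : MixedGraph V) (a : V) : G.Strongly a a :=
  ⟨Relation.ReflTransGen.refl, Relation.ReflTransGen.refl⟩

lemma Strongly.symm {G : MixedGraph V} {a b : V} (h : G.Strongly a b) : G.Strongly b a :=
  ⟨h.2, h.1⟩

/-- A graph is acyclic if it has no nontrivial directed closed walk. -/
def Acyclic (G : MixedGraph V) : Prop := ∀ a, ¬ Relation.TransGen G.dir a a

end MixedGraph

/-! ## Walks -/

/-- The four ways in which an edge can occur on a walk, as traversed from its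
first node `a` to its second node `b`: `fw` is `a → b`, `bw` is `a ← b`,
`bi` is `a ↔ b` and `un` is `a − b`. -/
inductive StepKind | fw | bw | bi | un
deriving DecidableEq

/-- A step of a walk: an ordered pair of nodes together with the kind of edge. -/
structure Step (V : Type) where
  a : V
  b : V
  k : StepKind

/-- The step is an actual edge of the graph `G`. -/
def Step.ok {V : Type} (G : MixedGraph V) (s : Step V) : Prop :=
  match s.k with
  | .fw => G.dir s.a s.b
  | .bw => G.dir s.b s.a
  | .bi => G.bidir s.a s.b
  | .un => G.undir s.a s.b

/-- The edge of the step has an arrowhead at its first node. -/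
def Step.headA {V : Type} (s : Step V) : Prop := s.k = .bw ∨ s.k = .bi

/-- The edge of the step has an arrowhead at its second node. -/
def Step.headB {V : Type} (s : Step V) : Prop := s.k = .fw ∨ s.k = .bi

namespace MixedGraph

variable {V I : Type}

/-- `IsWalk G x y L`: the list of steps `L` forms a walk from `x` to `y` in `G`. -/
inductive IsWalk (G : MixedGraph V) : V → V → List (Step V) → Prop
  | nil (a : V) : IsWalk G a a []
  | cons {c : V} (s : Step V) (L : List (Step V)) (hok : s.ok G)
      (hw : IsWalk G s.b c L) : IsWalk G s.a c (s :: L)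

/-- `v` is a collider at junction `i` of the walk `L`: both edges adjacent to the
inner node `v` point into `v`. -/
def ColliderAt (L : List (Step V)) (i : ℕ) (v : V) : Prop :=
  ∃ s t, L[i]? = some s ∧ L[i+1]? = some t ∧ s.b = v ∧ t.a = v ∧ s.headB ∧ t.headA

/-- `v` is a non-collider at junction `i` of the walk `L`. -/
def NonColliderAt (L : List (Step V)) (i : ℕ) (v : V) : Prop :=
  ∃ s t, L[i]? = some s ∧ L[i+1]? = some t ∧ s.b = v ∧ t.a = v ∧ ¬ (s.headB ∧ t.headA)

/-- The walk `L` from `x` to `y` is m-blocked by the node set `S`. -/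
def MBlockedWalk (G : MixedGraph V) (S : Set V) (x y : V) (L : List (Step V)) : Prop :=
  x ∈ S ∨ y ∈ S ∨
  (∃ i v, ColliderAt L i v ∧ ∀ d, Relation.ReflTransGen G.dir v d → d ∉ S) ∨
  (∃ i v, NonColliderAt L i v ∧ v ∈ S)

/-- The walk `L` from `x` to `y` is σ-blocked by the node set `S`. -/
def SigmaBlockedWalk (G : MixedGraph V) (S : Set V) (x y : V) (L : List (Step V)) : Prop :=
  x ∈ S ∨ y ∈ S ∨
  (∃ i v, ColliderAt L i v ∧ ∀ d, Relation.ReflTransGen G.dir v d → d ∉ S) ∨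
  (∃ i s t, L[i]? = some s ∧ L[i+1]? = some t ∧ s.b = t.a ∧ ¬ (s.headB ∧ t.headA) ∧
    s.b ∈ S ∧
    (((s.k = .bw ∨ s.k = .un) ∧ ¬ G.Strongly s.b s.a) ∨
     ((t.k = .fw ∨ t.k = .un) ∧ ¬ G.Strongly t.a t.b)))

/-- `x` and `y` are m-separated by `S` in `G`. -/
def MSep (G : MixedGraph V) (S : Set V) (x y : V) : Prop :=
  ∀ L, G.IsWalk x y L → G.MBlockedWalk S x y L

/-- `x` and `y` are σ-separated by `S` in `G`. -/
def SigmaSep (G : MixedGraph V) (S : Set V) (x y : V) : Prop :=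
  ∀ L, G.IsWalk x y L → G.SigmaBlockedWalk S x y L

/-! ## Acyclification -/

/-- The acyclification of a mixed graph. -/
def acy (G : MixedGraph V) : MixedGraph V where
  dir a b := (∃ c, G.dir a c ∧ G.Strongly c b) ∧ ¬ G.Strongly a b
  bidir a b := a ≠ b ∧ (G.Strongly a b ∨
    ∃ a' b', G.Strongly a a' ∧ G.Strongly b b' ∧ G.bidir a' b')
  undir a b := ¬ G.Strongly a b ∧ G.undir a b
  bidir_symm := by
    rintro a b ⟨hab, h | ⟨a', b', ha, hb, h⟩⟩
    · exact ⟨hab.symm, Or.inl h.symm⟩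
    · exact ⟨hab.symm, Or.inr ⟨b', a', hb, ha, G.bidir_symm h⟩⟩
  undir_symm := by
    rintro a b ⟨h1, h2⟩
    exact ⟨fun h => h1 h.symm, G.undir_symm h2⟩
  dir_irrefl := fun a h => h.2 (Strongly.refl G a)
  bidir_irrefl := fun a h => h.1 rfl
  undir_irrefl := fun a h => h.1 (Strongly.refl G a)

/-! ## Coarse graphs -/

/-- The coarse (quotient) graph of `G` with respect to the partition given by the
quotient map `q` onto the set of groups `I`. -/
def coarse (G : MixedGraph V) (q : V → I) : MixedGraph I where
  dir Y Z := Y ≠ Z ∧ ∃ y z, q y = Y ∧ q z = Z ∧ G.dir y z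
  bidir Y Z := Y ≠ Z ∧ ∃ y z, q y = Y ∧ q z = Z ∧ G.bidir y z
  undir Y Z := Y ≠ Z ∧ ∃ y z, q y = Y ∧ q z = Z ∧ G.undir y z
  bidir_symm := by
    rintro Y Z ⟨hne, y, z, hy, hz, h⟩
    exact ⟨hne.symm, z, y, hz, hy, G.bidir_symm h⟩
  undir_symm := by
    rintro Y Z ⟨hne, y, z, hy, hz, h⟩
    exact ⟨hne.symm, z, y, hz, hy, G.undir_symm h⟩
  dir_irrefl := fun Y h => h.1 rfl
  bidir_irrefl := fun Y h => h.1 rfl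
  undir_irrefl := fun Y h => h.1 rfl

end MixedGraph

open MeasureTheory ProbabilityTheory

/-- The σ-algebra generated by the group `A` of the random variables `X v`. -/
def genOf {Ω V : Type} [MeasurableSpace Ω] (X : V → Ω → ℝ) (A : Set V) :
    MeasurableSpace Ω :=
  ⨆ v ∈ A, MeasurableSpace.comap (X v) inferInstance

/-- Mutual conditional independence of the groups `Y` and `Z` of random variables
given the group `W`. -/
def GroupCI {Ω V : Type} [m : MeasurableSpace Ω] [StandardBorelSpace Ω]
    (μ : Measure Ω) [IsFiniteMeasure μ] (X : V → Ω → ℝ) (Y Z W : Set V) : Prop :=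
  ∃ h : genOf X W ≤ m, ProbabilityTheory.CondIndep (genOf X W) (genOf X Y) (genOf X Z) h μ

/-- The joint distribution of the variables `X v` has a positive density. -/
def HasPositiveDensity {Ω V : Type} [MeasurableSpace Ω] [Fintype V] (μ : Measure Ω)
    (X : V → Ω → ℝ) : Prop :=
  ∃ f : (V → ℝ) → ℝ, Measurable f ∧ (∀ x, 0 < f x) ∧
    Measure.map (fun ω v => X v ω) μ = volume.withDensity fun x => ENNReal.ofReal (f x)

/-- The boundary `bd_e` at the second group `e.b` of a macro edge `e` of the coarse
graph: the micro-nodes in the group `e.b` that are endpoints of a micro-edge of the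
same type (and orientation) as `e` whose other endpoint lies in the group `e.a`. -/
def bdEnd {V I : Type} (G : MixedGraph V) (q : V → I) (e : Step I) : Set V :=
  {y | q y = e.b ∧ ∃ w, q w = e.a ∧ Step.ok G ⟨w, y, e.k⟩}

/-- The boundary `bd_e` at the first group `e.a` of a macro edge `e` of the coarse
graph. -/
def bdStart {V I : Type} (G : MixedGraph V) (q : V → I) (e : Step I) : Set V :=
  {w | q w = e.a ∧ ∃ y, q y = e.b ∧ Step.ok G ⟨w, y, e.k⟩}

/-- A (possibly trivial) directed path from `x` to `y` all of whose nodes lie in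
the set `A`. -/
def DirPathIn {V : Type} (G : MixedGraph V) (A : Set V) (x y : V) : Prop :=
  Relation.ReflTransGen (fun a b => G.dir a b ∧ a ∈ A ∧ b ∈ A) x y

open MeasureTheory ProbabilityTheory MixedGraph

variable {Ω V I : Type}

/-- `(G, μ)` is σ-Markovian: σ-separation implies conditional independence. -/
def SigmaMarkov [m : MeasurableSpace Ω] [StandardBorelSpace Ω] (G : MixedGraph V)
    (μ : Measure Ω) [IsFiniteMeasure μ] (X : V → Ω → ℝ) : Prop :=
  ∀ (a b : V) (S : Set V), G.SigmaSep S a b → GroupCI μ X {a} {b} S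

/-- `(G, μ)` is σ-faithful: conditional independence implies σ-separation. -/
def SigmaFaithful [m : MeasurableSpace Ω] [StandardBorelSpace Ω] (G : MixedGraph V)
    (μ : Measure Ω) [IsFiniteMeasure μ] (X : V → Ω → ℝ) : Prop :=
  ∀ (a b : V) (S : Set V), GroupCI μ X {a} {b} S → G.SigmaSep S a b

/-- `(G, μ)` is m-Markovian: m-separation implies conditional independence. -/
def MMarkov [m : MeasurableSpace Ω] [StandardBorelSpace Ω] (G : MixedGraph V)
    (μ : Measure Ω) [IsFiniteMeasure μ] (X : V → Ω → ℝ) : Prop :=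
  ∀ (a b : V) (S : Set V), G.MSep S a b → GroupCI μ X {a} {b} S

/-- The pair of the coarse graph `G.coarse q` and the distribution is σ-faithful on
the group level: mutual conditional independence of two groups given the union of
the groups in `S` implies their σ-separation by `S` in the coarse graph. -/
def SigmaFaithfulGrp [m : MeasurableSpace Ω] [StandardBorelSpace Ω] (G : MixedGraph V)
    (q : V → I) (μ : Measure Ω) [IsFiniteMeasure μ] (X : V → Ω → ℝ) : Prop :=
  ∀ (Y Z : I) (S : Set I),
    GroupCI μ X (q ⁻¹' {Y}) (q ⁻¹' {Z}) (q ⁻¹' S) → (G.coarse q).SigmaSep S Y Z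

/-! ## Auxiliary machinery for the proof -/

section AuxProof

open Relation MixedGraph

variable {V I : Type}

namespace MixedGraph

lemma Strongly.trans {G : MixedGraph V} {a b c : V} (h1 : G.Strongly a b)
    (h2 : G.Strongly b c) : G.Strongly a c :=
  ⟨h1.1.trans h2.1, h2.2.trans h1.2⟩

lemma IsWalk.append {G : MixedGraph V} {a b : V} {L1 : List (Step V)}
    (h1 : G.IsWalk a b L1) :
    ∀ {c : V} {L2 : List (Step V)}, G.IsWalk b c L2 → G.IsWalk a c (L1 ++ L2) := by
  induction h1 with
  | nil a => intro c L2 h2; simpa using h2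
  | cons s L hok hw ih => intro c L2 h2; exact IsWalk.cons s _ hok (ih h2)

lemma IsWalk.eq_of_nil {G : MixedGraph V} {a b : V} (h : G.IsWalk a b ([])) : a = b := by
  cases h; rfl

lemma IsWalk.ok_of_mem {G : MixedGraph V} {a b : V} {L : List (Step V)}
    (h : G.IsWalk a b L) {s : Step V} (hs : s ∈ L) : s.ok G := by
  induction h with
  | nil a => simp at hs
  | cons t L hok hw ih =>
    rcases List.mem_cons.1 hs with rfl | hs
    · exact hok
    · exact ih hs

lemma IsWalk.head?_a {G : MixedGraph V} {a b : V} {L : List (Step V)}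
    (h : G.IsWalk a b L) {s : Step V} (hs : L.head? = some s) : s.a = a := by
  cases h with
  | nil a => simp at hs
  | cons t L hok hw =>
    simp only [List.head?_cons, Option.some.injEq] at hs
    subst hs; rfl

lemma IsWalk.getLast?_b {G : MixedGraph V} {a b : V} {L : List (Step V)}
    (h : G.IsWalk a b L) {s : Step V} (hs : L.getLast? = some s) : s.b = b := by
  induction h with
  | nil a => simp at hs
  | cons t L hok hw ih =>
    cases L with
    | nil =>
      simp only [List.getLast?_singleton, Option.some.injEq] at hs
      subst hs
      exact hw.eq_of_nil
    | cons u L' => exact ih (by simpa using hs)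

end MixedGraph

/-- Reversal of a step kind. -/
def StepKind.rev : StepKind → StepKind
  | .fw => .bw
  | .bw => .fw
  | .bi => .bi
  | .un => .un

/-- Reversal of a step. -/
def Step.rev (s : Step V) : Step V := ⟨s.b, s.a, s.k.rev⟩

lemma Step.rev_ok {G : MixedGraph V} {s : Step V} (h : s.ok G) : s.rev.ok G := by
  obtain ⟨a, b, k⟩ := s
  cases k with
  | fw => exact h
  | bw => exact h
  | bi => exact G.bidir_symm h
  | un => exact G.undir_symm h

lemma MixedGraph.IsWalk.reverse {G : MixedGraph V} {a b : V} {L : List (Step V)}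
    (h : G.IsWalk a b L) : G.IsWalk b a (L.reverse.map Step.rev) := by
  induction h with
  | nil a => exact .nil a
  | cons s L hok hw ih =>
    rw [List.reverse_cons, List.map_append]
    exact ih.append (MixedGraph.IsWalk.cons s.rev ([]) (Step.rev_ok hok) (IsWalk.nil _))

/-- Adjacent pair of entries of a list. -/
def AdjP {α : Type} (L : List α) (s t : α) : Prop :=
  ∃ i : ℕ, L[i]? = some s ∧ L[i+1]? = some t

lemma adjP_cons {α : Type} {a : α} {L : List α} {s t : α} :
    AdjP (a :: L) s t ↔ (s = a ∧ L.head? = some t) ∨ AdjP L s t := by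
  constructor
  · rintro ⟨i, h1, h2⟩
    cases i with
    | zero =>
      left
      simp only [List.getElem?_cons_zero, Option.some.injEq] at h1
      refine ⟨h1.symm, ?_⟩
      rw [List.head?_eq_getElem?]
      simpa using h2
    | succ n => exact Or.inr ⟨n, by simpa using h1, by simpa using h2⟩
  · rintro (⟨rfl, h⟩ | ⟨i, h1, h2⟩)
    · exact ⟨0, by simp, by rw [List.head?_eq_getElem?] at h; simpa using h⟩
    · exact ⟨i + 1, by simpa using h1, by simpa using h2⟩

lemma adjP_of_adjP_cons {α : Type} {a : α} {L : List α} {s t : α} (h : AdjP L s t) :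
    AdjP (a :: L) s t := adjP_cons.2 (Or.inr h)

lemma adjP_append {α : Type} {L1 L2 : List α} {s t : α} (h : AdjP (L1 ++ L2) s t) :
    AdjP L1 s t ∨ (L1.getLast? = some s ∧ L2.head? = some t) ∨ AdjP L2 s t := by
  induction L1 with
  | nil => exact Or.inr (Or.inr (by simpa using h))
  | cons a L1 ih =>
    rw [List.cons_append, adjP_cons] at h
    rcases h with ⟨rfl, hh⟩ | h
    · cases L1 with
      | nil => exact Or.inr (Or.inl ⟨by simp, by simpa using hh⟩)
      | cons b L1' =>
        left
        exact adjP_cons.2 (Or.inl ⟨rfl, by simpa using hh⟩)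
    · rcases ih h with h | h | h
      · exact Or.inl (adjP_of_adjP_cons h)
      · refine Or.inr (Or.inl ⟨?_, h.2⟩)
        cases L1 with
        | nil => simp at h
        | cons b L1' => rw [List.getLast?_cons_cons]; exact h.1
      · exact Or.inr (Or.inr h)

lemma mem_of_getElem? {α : Type} {L : List α} {i : ℕ} {s : α} (h : L[i]? = some s) :
    s ∈ L := by
  rw [List.getElem?_eq_some_iff] at h
  obtain ⟨h1, rfl⟩ := h
  exact List.getElem_mem _

lemma mem_of_getLast? {α : Type} {L : List α} {s : α} (h : L.getLast? = some s) :
    s ∈ L := by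
  induction L with
  | nil => simp at h
  | cons a L ih =>
    cases L with
    | nil =>
      simp only [List.getLast?_singleton, Option.some.injEq] at h
      subst h; exact List.mem_singleton_self a
    | cons b L' =>
      rw [List.getLast?_cons_cons] at h
      exact List.mem_cons_of_mem _ (ih h)

end AuxProof
section AuxProof2

open Relation MixedGraph

variable {V I : Type}

lemma exists_fw_walk {G : MixedGraph V} {b : V} :
    ∀ {a : V}, Relation.ReflTransGen G.dir a b → Relation.ReflTransGen G.dir b a →
      ∃ L, G.IsWalk a b L ∧
        ∀ s ∈ L, s.k = StepKind.fw ∧ G.Strongly a s.a ∧ G.Strongly a s.b := by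
  intro a hab
  induction hab using Relation.ReflTransGen.head_induction_on with
  | refl => exact fun _ => ⟨([]), IsWalk.nil b, by simp⟩
  | @head a c h' hrest ih =>
    intro hba
    obtain ⟨L, hw, hp⟩ := ih (hba.tail h')
    have hac : G.Strongly a c := ⟨Relation.ReflTransGen.single h', hrest.trans hba⟩
    refine ⟨⟨a, c, StepKind.fw⟩ :: L,
      IsWalk.cons ⟨a, c, StepKind.fw⟩ L (show Step.ok G ⟨a, c, StepKind.fw⟩ from h') hw, ?_⟩
    intro s hs
    rcases List.mem_cons.1 hs with rfl | hs
    · exact ⟨rfl, Strongly.refl G a, hac⟩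
    · obtain ⟨h1, h2, h3⟩ := hp s hs
      exact ⟨h1, hac.trans h2, hac.trans h3⟩

lemma exists_bw_walk {G : MixedGraph V} {a b : V} (hab : Relation.ReflTransGen G.dir a b)
    (hba : Relation.ReflTransGen G.dir b a) :
    ∃ L, G.IsWalk a b L ∧
      ∀ s ∈ L, s.k = StepKind.bw ∧ G.Strongly a s.a ∧ G.Strongly a s.b := by
  obtain ⟨L, hw, hp⟩ := exists_fw_walk hba hab
  refine ⟨L.reverse.map Step.rev, hw.reverse, ?_⟩
  intro s hs
  rw [List.mem_map] at hs
  obtain ⟨u, hu, rfl⟩ := hs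
  obtain ⟨h1, h2, h3⟩ := hp u (List.mem_reverse.1 hu)
  have hSab : G.Strongly a b := ⟨hab, hba⟩
  refine ⟨?_, hSab.trans h3, hSab.trans h2⟩
  show u.k.rev = StepKind.bw
  rw [h1]
  rfl

/-- The local requirement on an adjacent pair of steps of an unblocked walk. -/
def PairOK (G : MixedGraph V) (T : Set V) (s t : Step V) : Prop :=
  (s.headB ∧ t.headA → ∃ d, Relation.ReflTransGen G.dir s.b d ∧ d ∈ T) ∧
  (¬(s.headB ∧ t.headA) → s.b ∈ T →
    ¬(((s.k = StepKind.bw ∨ s.k = StepKind.un) ∧ ¬ G.Strongly s.b s.a) ∨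
      ((t.k = StepKind.fw ∨ t.k = StepKind.un) ∧ ¬ G.Strongly t.a t.b)))

lemma not_sigmaBlocked {G : MixedGraph V} {T : Set V} {a b : V} {L : List (Step V)}
    (hA : a ∉ T) (hB : b ∉ T) (hp : ∀ s t, AdjP L s t → PairOK G T s t) :
    ¬ G.SigmaBlockedWalk T a b L := by
  rintro (h | h | ⟨i, v, ⟨s, t, h1, h2, h3, h4, h5, h6⟩, hdesc⟩ |
    ⟨i, s, t, h1, h2, h3, h4, h5, h6⟩)
  · exact hA h
  · exact hB h
  · obtain ⟨d, hd1, hd2⟩ := (hp s t ⟨i, h1, h2⟩).1 ⟨h5, h6⟩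
    exact hdesc d (h3 ▸ hd1) hd2
  · exact (hp s t ⟨i, h1, h2⟩).2 h4 h5 h6

lemma kind_eq_fw_of {W : Type} {t : Step W} (h1 : ¬ t.headA) (h2 : t.k ≠ StepKind.un) :
    t.k = StepKind.fw := by
  cases hk : t.k with
  | fw => rfl
  | bw => exact absurd (Or.inl hk) h1
  | bi => exact absurd (Or.inr hk) h1
  | un => exact absurd hk h2

lemma kind_eq_bw_of {W : Type} {t : Step W} (h1 : ¬ t.headB) (h2 : t.k ≠ StepKind.un) :
    t.k = StepKind.bw := by
  cases hk : t.k with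
  | fw => exact absurd (Or.inl hk) h1
  | bw => rfl
  | bi => exact absurd (Or.inr hk) h1
  | un => exact absurd hk h2

lemma coarse_ok_facts {G : MixedGraph V} {q : V → I} (hDMG : G.IsDMG) {s : Step I}
    (h : Step.ok (G.coarse q) s) : s.a ≠ s.b ∧ s.k ≠ StepKind.un := by
  obtain ⟨A, B, k⟩ := s
  cases k with
  | fw => exact ⟨h.1, fun hh => StepKind.noConfusion hh⟩
  | bw => exact ⟨fun hab => h.1 hab.symm, fun hh => StepKind.noConfusion hh⟩
  | bi => exact ⟨h.1, fun hh => StepKind.noConfusion hh⟩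
  | un =>
    obtain ⟨-, y, z, -, -, hu⟩ := h
    exact absurd hu (hDMG y z)

lemma coarse_ok_micro {G : MixedGraph V} {q : V → I} (hDMG : G.IsDMG) {s : Step I}
    (h : Step.ok (G.coarse q) s) :
    ∃ w z, q w = s.a ∧ q z = s.b ∧ Step.ok G ⟨w, z, s.k⟩ := by
  obtain ⟨A, B, k⟩ := s
  cases k with
  | fw => obtain ⟨-, y, z, hy, hz, hd⟩ := h; exact ⟨y, z, hy, hz, hd⟩
  | bw => obtain ⟨-, y, z, hy, hz, hd⟩ := h; exact ⟨z, y, hz, hy, hd⟩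
  | bi => obtain ⟨-, y, z, hy, hz, hd⟩ := h; exact ⟨y, z, hy, hz, hd⟩
  | un => obtain ⟨-, y, z, -, -, hu⟩ := h; exact absurd hu (hDMG y z)

lemma not_strongly_of_acyclic {C : MixedGraph I} (hac : C.Acyclic) {A B : I} (hne : A ≠ B) :
    ¬ C.Strongly A B := by
  rintro ⟨hAB, hBA⟩
  rcases hAB.cases_head with rfl | ⟨c, hc, hcb⟩
  · exact hne rfl
  · exact hac A ((Relation.TransGen.head' hc hcb).trans_left hBA)

/-- The local requirement on an adjacent pair of steps of an unblocked coarse walk. -/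
def CPairOK (C : MixedGraph I) (S : Set I) (s t : Step I) : Prop :=
  (s.headB ∧ t.headA → ∃ D, Relation.ReflTransGen C.dir s.b D ∧ D ∈ S) ∧
  (¬(s.headB ∧ t.headA) → s.b ∉ S)

lemma coarse_pairs {G : MixedGraph V} {q : V → I} (hDMG : G.IsDMG)
    (hac : (G.coarse q).Acyclic) {S : Set I} {Y Z : I} {Lc : List (Step I)}
    (hw : (G.coarse q).IsWalk Y Z Lc)
    (hnb : ¬ (G.coarse q).SigmaBlockedWalk S Y Z Lc) :
    Y ∉ S ∧ Z ∉ S ∧ ∀ s t, AdjP Lc s t → s.b = t.a → CPairOK (G.coarse q) S s t := by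
  refine ⟨fun h => hnb (Or.inl h), fun h => hnb (Or.inr (Or.inl h)), ?_⟩
  rintro s t ⟨i, h1, h2⟩ hba
  constructor
  · rintro ⟨hB, hA⟩
    by_contra hno
    push_neg at hno
    exact hnb (Or.inr (Or.inr (Or.inl ⟨i, s.b, ⟨s, t, h1, h2, rfl, hba.symm, hB, hA⟩,
      fun d hd => hno d hd⟩)))
  · intro hnc hbS
    have hsok := hw.ok_of_mem (mem_of_getElem? h1)
    have htok := hw.ok_of_mem (mem_of_getElem? h2)
    obtain ⟨hsne, hsun⟩ := coarse_ok_facts hDMG hsok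
    obtain ⟨htne, htun⟩ := coarse_ok_facts hDMG htok
    refine hnb (Or.inr (Or.inr (Or.inr ⟨i, s, t, h1, h2, hba, hnc, hbS, ?_⟩)))
    by_cases hh : s.headB
    · have htA : ¬ t.headA := fun h => hnc ⟨hh, h⟩
      exact Or.inr ⟨Or.inl (kind_eq_fw_of htA htun), not_strongly_of_acyclic hac htne⟩
    · exact Or.inl ⟨Or.inl (kind_eq_bw_of hh hsun), not_strongly_of_acyclic hac hsne.symm⟩

lemma descend_lift {G : MixedGraph V} {q : V → I}
    (h3 : ∀ e e' : Step I, Step.ok (G.coarse q) e → Step.ok (G.coarse q) e' →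
      e.b = e'.a → ∀ y ∈ bdEnd G q e, ∃ y' ∈ bdStart G q e', G.Strongly y y')
    {W D : I} (hWD : Relation.ReflTransGen (G.coarse q).dir W D) :
    ∀ (e : Step I) (y : V), Step.ok (G.coarse q) e → e.b = W → y ∈ bdEnd G q e →
      ∃ (e' : Step I) (d : V), Step.ok (G.coarse q) e' ∧ e'.b = D ∧ d ∈ bdEnd G q e' ∧
        Relation.ReflTransGen G.dir y d := by
  induction hWD using Relation.ReflTransGen.head_induction_on with
  | refl =>
    intro e y hok hb hy
    exact ⟨e, y, hok, hb, hy, Relation.ReflTransGen.refl⟩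
  | @head a c h' hrest ih =>
    intro e y hok hb hy
    have hok' : Step.ok (G.coarse q) ⟨a, c, StepKind.fw⟩ := h'
    obtain ⟨y', hy', hstr⟩ := h3 e ⟨a, c, StepKind.fw⟩ hok hok' hb y hy
    obtain ⟨hqy', z, hqz, hokz⟩ := hy'
    obtain ⟨e'', d, he1, he2, he3, he4⟩ := ih ⟨a, c, StepKind.fw⟩ z hok' rfl ⟨hqz, y', hqy', hokz⟩
    exact ⟨e'', d, he1, he2, he3, (hstr.1.tail hokz).trans he4⟩

lemma coarse_acyclic [Fintype V] {G : MixedGraph V} {q : V → I}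
    (h2 : ∀ a b, G.Strongly a b → q a = q b)
    (h3 : ∀ e e' : Step I, Step.ok (G.coarse q) e → Step.ok (G.coarse q) e' →
      e.b = e'.a → ∀ y ∈ bdEnd G q e, ∃ y' ∈ bdStart G q e', G.Strongly y y') :
    (G.coarse q).Acyclic := by
  intro A hA
  obtain ⟨B, hRT, hBA⟩ : ∃ B, Relation.ReflTransGen (G.coarse q).dir A B ∧
      (G.coarse q).dir B A := by
    cases hA with
    | single h => exact ⟨A, Relation.ReflTransGen.refl, h⟩
    | tail h1 hl => exact ⟨_, h1.to_reflTransGen, hl⟩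
  have hok0 : Step.ok (G.coarse q) ⟨B, A, StepKind.fw⟩ := hBA
  obtain ⟨hne, y0, z0, hy0, hz0, hd0⟩ := hBA
  have hz0mem : z0 ∈ bdEnd G q ⟨B, A, StepKind.fw⟩ := ⟨hz0, y0, hy0, hd0⟩
  have key : ∀ v, v ∈ bdEnd G q ⟨B, A, StepKind.fw⟩ → ∃ z y',
      z ∈ bdEnd G q ⟨B, A, StepKind.fw⟩ ∧
      Relation.ReflTransGen G.dir v y' ∧ G.dir y' z ∧ q y' = B := by
    intro v hv
    obtain ⟨e', d, he1, he2, he3, he4⟩ := descend_lift h3 hRT ⟨B, A, StepKind.fw⟩ v hok0 rfl hv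
    obtain ⟨y', hy', hstr⟩ := h3 e' ⟨B, A, StepKind.fw⟩ he1 hok0 he2 d he3
    obtain ⟨hqy', z, hqz, hokz⟩ := hy'
    exact ⟨z, y', ⟨hqz, y', hqy', hokz⟩, he4.trans hstr.1, hokz, hqy'⟩
  choose! f g hmem hreach hdir hqg using key
  set v : ℕ → V := fun n => f^[n] z0 with hvdef
  have hv : ∀ n, v n ∈ bdEnd G q ⟨B, A, StepKind.fw⟩ := by
    intro n
    induction n with
    | zero => exact hz0mem
    | succ n ih =>
      rw [show v (n + 1) = f (v n) from Function.iterate_succ_apply' f n z0]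
      exact hmem _ ih
  have hstep : ∀ n, Relation.ReflTransGen G.dir (v n) (v (n + 1)) := by
    intro n
    rw [show v (n + 1) = f (v n) from Function.iterate_succ_apply' f n z0]
    exact (hreach _ (hv n)).tail (hdir _ (hv n))
  have hchain : ∀ m n, m ≤ n → Relation.ReflTransGen G.dir (v m) (v n) := by
    intro m n hmn
    induction hmn with
    | refl => exact Relation.ReflTransGen.refl
    | step h ih => exact ih.trans (hstep _)
  obtain ⟨m, n, hmn, heq⟩ : ∃ m n, m < n ∧ v m = v n := by
    obtain ⟨m, n, hne', heq⟩ := Finite.exists_ne_map_eq_of_infinite v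
    rcases lt_or_gt_of_ne hne' with h | h
    · exact ⟨m, n, h, heq⟩
    · exact ⟨n, m, h, heq.symm⟩
  have hBA' : G.Strongly (g (v m)) (v (m + 1)) := by
    constructor
    · refine Relation.ReflTransGen.single ?_
      rw [show v (m + 1) = f (v m) from Function.iterate_succ_apply' f m z0]
      exact hdir _ (hv m)
    · refine (hchain (m + 1) n hmn).trans ?_
      rw [← heq]
      exact hreach _ (hv m)
  have hq' := h2 _ _ hBA'
  exact hne (by rw [← hqg _ (hv m), hq', (hv (m + 1)).1])

end AuxProof2
section LiftLemma

open Relation MixedGraph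

variable {V I : Type}

lemma conn_pairs {G : MixedGraph V} {T : Set V} {y : V} {κ : StepKind}
    (hκ : κ = StepKind.fw ∨ κ = StepKind.bw) {conn : List (Step V)}
    (hk : ∀ s ∈ conn, s.k = κ ∧ G.Strongly y s.a ∧ G.Strongly y s.b) :
    ∀ s t, AdjP conn s t → PairOK G T s t := by
  rintro s t ⟨i, h1, h2⟩
  obtain ⟨hs1, hs2, hs3⟩ := hk s (mem_of_getElem? h1)
  obtain ⟨ht1, ht2, ht3⟩ := hk t (mem_of_getElem? h2)
  constructor
  · rintro ⟨hB, hA⟩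
    exfalso
    rcases hκ with rfl | rfl
    · rcases hA with h | h <;> rw [ht1] at h <;> exact StepKind.noConfusion h
    · rcases hB with h | h <;> rw [hs1] at h <;> exact StepKind.noConfusion h
  · intro _ _
    rintro (⟨hk', hns⟩ | ⟨hk', hns⟩)
    · rcases hκ with rfl | rfl
      · rcases hk' with h | h <;> rw [hs1] at h <;> exact StepKind.noConfusion h
      · exact hns (hs3.symm.trans hs2)
    · rcases hκ with rfl | rfl
      · exact hns (ht2.symm.trans ht3)
      · rcases hk' with h | h <;> rw [ht1] at h <;> exact StepKind.noConfusion h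

lemma assemble_walk {G : MixedGraph V} {T : Set V} {y y' b : V}
    {conn : List (Step V)} {t₁ : Step V} {Lm' : List (Step V)}
    (hconn : G.IsWalk y y' conn)
    (hwt : G.IsWalk y' b (t₁ :: Lm'))
    (hconnP : ∀ s t, AdjP conn s t → PairOK G T s t)
    (hadj' : ∀ s t, AdjP Lm' s t → PairOK G T s t)
    (hpt1 : ∀ t, Lm'.head? = some t → PairOK G T t₁ t)
    (hbound : ∀ s, conn.getLast? = some s → PairOK G T s t₁) :
    G.IsWalk y b (conn ++ t₁ :: Lm') ∧
    ∀ s t, AdjP (conn ++ t₁ :: Lm') s t → PairOK G T s t := by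
  refine ⟨hconn.append hwt, ?_⟩
  intro s t ha
  rcases adjP_append ha with h | ⟨hl, hh⟩ | h
  · exact hconnP s t h
  · simp only [List.head?_cons, Option.some.injEq] at hh
    subst hh
    exact hbound s hl
  · rcases adjP_cons.1 h with ⟨rfl, hh⟩ | h
    · exact hpt1 t hh
    · exact hadj' s t h

lemma lift_walk {G : MixedGraph V} {q : V → I} (hDMG : G.IsDMG)
    (h2 : ∀ a b, G.Strongly a b → q a = q b)
    (h3 : ∀ e e' : Step I, Step.ok (G.coarse q) e → Step.ok (G.coarse q) e' →
      e.b = e'.a → ∀ y ∈ bdEnd G q e, ∃ y' ∈ bdStart G q e', G.Strongly y y')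
    {S : Set I} {Y Z : I} {Lc : List (Step I)}
    (hw : (G.coarse q).IsWalk Y Z Lc) :
    Z ∉ S → ∀ (e : Step I) (y : V), Step.ok (G.coarse q) e → e.b = Y → y ∈ bdEnd G q e →
    (∀ s t, AdjP (e :: Lc) s t → s.b = t.a → CPairOK (G.coarse q) S s t) →
    ∃ (b : V) (Lm : List (Step V)), q b = Z ∧ G.IsWalk y b Lm ∧ b ∉ q ⁻¹' S ∧
      (∀ s t, AdjP Lm s t → PairOK G (q ⁻¹' S) s t) ∧
      (∀ t, Lm.head? = some t → t.a = y ∧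
        ∀ w, q w = e.a → PairOK G (q ⁻¹' S) ⟨w, y, e.k⟩ t) := by
  induction hw with
  | nil A =>
    intro hZ e y hok hb hy hpairs
    refine ⟨y, ([]), hy.1.trans hb, IsWalk.nil y, ?_, ?_, ?_⟩
    · intro hT
      exact hZ ((hy.1.trans hb) ▸ Set.mem_preimage.1 hT)
    · rintro s t ⟨i, h1, -⟩
      simp at h1
    · intro t ht
      simp at ht
  | @cons Zc E' Lc' hok' hw' ih =>
    intro hZ e y hok hb hy hpairs
    obtain ⟨hene, heun⟩ := coarse_ok_facts hDMG hok
    obtain ⟨hE'ne, hE'un⟩ := coarse_ok_facts hDMG hok'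
    have hpair0 : CPairOK (G.coarse q) S e E' := hpairs e E' ⟨0, by simp, by simp⟩ hb
    obtain ⟨y', hy', hstr⟩ := h3 e E' hok hok' hb y hy
    obtain ⟨hqy', z', hqz', hokz'⟩ := hy'
    have hz' : z' ∈ bdEnd G q E' := ⟨hqz', y', hqy', hokz'⟩
    obtain ⟨b, Lm', hqb, hwm', hbT, hadj', hhd'⟩ :=
      ih hZ E' z' hok' rfl hz' (fun s t ha hba => hpairs s t (adjP_of_adjP_cons ha) hba)
    have ht1ok : Step.ok G ⟨y', z', E'.k⟩ := hokz'
    have hwt : G.IsWalk y' b (⟨y', z', E'.k⟩ :: Lm') :=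
      IsWalk.cons ⟨y', z', E'.k⟩ Lm' ht1ok hwm'
    have hqy : q y = e.b := hy.1
    have hpt1 : ∀ t, Lm'.head? = some t → PairOK G (q ⁻¹' S) ⟨y', z', E'.k⟩ t :=
      fun t ht => (hhd' t ht).2 y' hqy'
    by_cases hEfw : E'.k = StepKind.fw
    · -- the outgoing macro edge has a tail at the junction group
      have hncol : ¬ (e.headB ∧ E'.headA) := by
        rintro ⟨-, h | h⟩ <;> rw [hEfw] at h <;> exact StepKind.noConfusion h
      have hYnS : e.b ∉ S := hpair0.2 hncol
      have hnotT : ∀ u, G.Strongly y u → u ∉ q ⁻¹' S := by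
        intro u hu hT
        exact hYnS (by rw [← hqy, h2 _ _ hu]; exact Set.mem_preimage.1 hT)
      have hyT : y ∉ q ⁻¹' S := hnotT y (Strongly.refl G y)
      have hy'T : y' ∉ q ⁻¹' S := hnotT y' hstr
      obtain ⟨conn, hconn, hkp⟩ := exists_fw_walk hstr.1 hstr.2
      have hconnP : ∀ s t, AdjP conn s t → PairOK G (q ⁻¹' S) s t :=
        conn_pairs (Or.inl rfl) hkp
      have hbound : ∀ s, conn.getLast? = some s → PairOK G (q ⁻¹' S) s ⟨y', z', E'.k⟩ := by
        intro s hl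
        have hsb : s.b = y' := hconn.getLast?_b hl
        constructor
        · rintro ⟨-, hA | hA⟩ <;> rw [hEfw] at hA <;> exact StepKind.noConfusion hA
        · intro _ hT
          exact absurd (show y' ∈ q ⁻¹' S by rwa [hsb] at hT) hy'T
      obtain ⟨hwalk, hadjALL⟩ := assemble_walk hconn hwt hconnP hadj' hpt1 hbound
      refine ⟨b, conn ++ ⟨y', z', E'.k⟩ :: Lm', hqb, hwalk, hbT, hadjALL, ?_⟩
      cases conn with
      | nil =>
        have hyy' : y = y' := hconn.eq_of_nil
        intro t ht
        simp only [List.nil_append, List.head?_cons, Option.some.injEq] at ht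
        subst ht
        refine ⟨by rw [hyy'], ?_⟩
        intro w hqw
        constructor
        · rintro ⟨-, hA | hA⟩ <;> rw [hEfw] at hA <;> exact StepKind.noConfusion hA
        · intro _ hT
          exact absurd hT hyT
      | cons c0 conn' =>
        intro t ht
        simp only [List.cons_append, List.head?_cons, Option.some.injEq] at ht
        subst ht
        obtain ⟨hc1, hc2, hc3⟩ := hkp c0 (List.mem_cons_self (a := c0) (l := conn'))
        refine ⟨hconn.head?_a rfl, ?_⟩
        intro w hqw
        constructor
        · rintro ⟨-, hA | hA⟩ <;> rw [hc1] at hA <;> exact StepKind.noConfusion hA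
        · intro _ hT
          exact absurd hT hyT
    · have hE'A : E'.headA := by
        cases hk : E'.k with
        | fw => exact absurd hk hEfw
        | bw => exact Or.inl hk
        | bi => exact Or.inr hk
        | un => exact absurd hk hE'un
      have ht1A : Step.headA ⟨y', z', E'.k⟩ := hE'A
      by_cases hebw : e.k = StepKind.bw
      · -- incoming macro edge has a tail at the junction group
        have hncol : ¬ (e.headB ∧ E'.headA) := by
          rintro ⟨h | h, -⟩ <;> rw [hebw] at h <;> exact StepKind.noConfusion h
        have hYnS : e.b ∉ S := hpair0.2 hncol
        have hnotT : ∀ u, G.Strongly y u → u ∉ q ⁻¹' S := by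
          intro u hu hT
          exact hYnS (by rw [← hqy, h2 _ _ hu]; exact Set.mem_preimage.1 hT)
        have hyT : y ∉ q ⁻¹' S := hnotT y (Strongly.refl G y)
        have hy'T : y' ∉ q ⁻¹' S := hnotT y' hstr
        obtain ⟨conn, hconn, hkp⟩ := exists_bw_walk hstr.1 hstr.2
        have hconnP : ∀ s t, AdjP conn s t → PairOK G (q ⁻¹' S) s t :=
          conn_pairs (Or.inr rfl) hkp
        have hbound : ∀ s, conn.getLast? = some s → PairOK G (q ⁻¹' S) s ⟨y', z', E'.k⟩ := by
          intro s hl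
          obtain ⟨hs1, -, -⟩ := hkp s (mem_of_getLast? hl)
          have hsb : s.b = y' := hconn.getLast?_b hl
          constructor
          · rintro ⟨hB | hB, -⟩ <;> rw [hs1] at hB <;> exact StepKind.noConfusion hB
          · intro _ hT
            exact absurd (show y' ∈ q ⁻¹' S by rwa [hsb] at hT) hy'T
        obtain ⟨hwalk, hadjALL⟩ := assemble_walk hconn hwt hconnP hadj' hpt1 hbound
        refine ⟨b, conn ++ ⟨y', z', E'.k⟩ :: Lm', hqb, hwalk, hbT, hadjALL, ?_⟩
        cases conn with
        | nil =>
          have hyy' : y = y' := hconn.eq_of_nil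
          intro t ht
          simp only [List.nil_append, List.head?_cons, Option.some.injEq] at ht
          subst ht
          refine ⟨by rw [hyy'], ?_⟩
          intro w hqw
          constructor
          · rintro ⟨hB | hB, -⟩ <;> rw [hebw] at hB <;> exact StepKind.noConfusion hB
          · intro _ hT
            exact absurd hT hyT
        | cons c0 conn' =>
          intro t ht
          simp only [List.cons_append, List.head?_cons, Option.some.injEq] at ht
          subst ht
          refine ⟨hconn.head?_a rfl, ?_⟩
          intro w hqw
          constructor
          · rintro ⟨hB | hB, -⟩ <;> rw [hebw] at hB <;> exact StepKind.noConfusion hB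
          · intro _ hT
            exact absurd hT hyT
      · -- collider junction
        have heB : e.headB := by
          cases hk : e.k with
          | fw => exact Or.inl hk
          | bw => exact absurd hk hebw
          | bi => exact Or.inr hk
          | un => exact absurd hk heun
        obtain ⟨D, hDreach, hDS⟩ := hpair0.1 ⟨heB, hE'A⟩
        obtain ⟨e'', d, -, he2, he3, he4⟩ := descend_lift h3 hDreach e y hok rfl hy
        have hdT : d ∈ q ⁻¹' S := by
          show q d ∈ S
          rw [he3.1, he2]
          exact hDS
        obtain ⟨conn, hconn, hkp⟩ := exists_fw_walk hstr.1 hstr.2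
        have hconnP : ∀ s t, AdjP conn s t → PairOK G (q ⁻¹' S) s t :=
          conn_pairs (Or.inl rfl) hkp
        have hbound : ∀ s, conn.getLast? = some s → PairOK G (q ⁻¹' S) s ⟨y', z', E'.k⟩ := by
          intro s hl
          obtain ⟨hs1, hs2, hs3⟩ := hkp s (mem_of_getLast? hl)
          have hsb : s.b = y' := hconn.getLast?_b hl
          constructor
          · intro _
            refine ⟨d, ?_, hdT⟩
            rw [hsb]
            exact hstr.2.trans he4
          · intro hnc _
            exact absurd ⟨Or.inl hs1, ht1A⟩ hnc
        obtain ⟨hwalk, hadjALL⟩ := assemble_walk hconn hwt hconnP hadj' hpt1 hbound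
        refine ⟨b, conn ++ ⟨y', z', E'.k⟩ :: Lm', hqb, hwalk, hbT, hadjALL, ?_⟩
        cases conn with
        | nil =>
          have hyy' : y = y' := hconn.eq_of_nil
          intro t ht
          simp only [List.nil_append, List.head?_cons, Option.some.injEq] at ht
          subst ht
          refine ⟨by rw [hyy'], ?_⟩
          intro w hqw
          constructor
          · intro _
            exact ⟨d, he4, hdT⟩
          · intro hnc _
            exact absurd ⟨heB, ht1A⟩ hnc
        | cons c0 conn' =>
          intro t ht
          simp only [List.cons_append, List.head?_cons, Option.some.injEq] at ht
          subst ht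
          obtain ⟨hc1, hc2, hc3⟩ := hkp c0 (List.mem_cons_self (a := c0) (l := conn'))
          have hc0a : c0.a = y := hconn.head?_a rfl
          refine ⟨hc0a, ?_⟩
          intro w hqw
          constructor
          · rintro ⟨-, hA | hA⟩ <;> rw [hc1] at hA <;> exact StepKind.noConfusion hA
          · intro _ _
            rintro (⟨hk', hns⟩ | ⟨hk', hns⟩)
            · rcases hk' with h | h
              · exact hebw h
              · exact heun h
            · refine hns ?_
              rw [hc0a]
              exact hc3

section CIMono

open MeasureTheory ProbabilityTheory

lemma genOf_mono {Ω V : Type} [MeasurableSpace Ω] (X : V → Ω → ℝ) {A B : Set V}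
    (h : A ⊆ B) : genOf X A ≤ genOf X B :=
  biSup_mono h

lemma GroupCI_mono {Ω V : Type} [m : MeasurableSpace Ω] [StandardBorelSpace Ω]
    {μ : Measure Ω} [IsFiniteMeasure μ] {X : V → Ω → ℝ}
    {A B W A' B' : Set V} (hA : A' ⊆ A) (hB : B' ⊆ B) (h : GroupCI μ X A B W) :
    GroupCI μ X A' B' W := by
  obtain ⟨hle, hi⟩ := h
  refine ⟨hle, ?_⟩
  intro t1 t2 ht1 ht2
  exact hi t1 t2 (genOf_mono X hA t1 ht1) (genOf_mono X hB t2 ht2)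

end CIMono
open MeasureTheory ProbabilityTheory MixedGraph in
/-- **Faithfulness criterion 1.** Assume (i) the micro-level pair
`(G, μ)` is σ-Markovian and σ-faithful, (ii) every strongly connected component of
`G` is contained in a single group of the partition `q`, and (iii) for every
adjacent pair of edges `e = (W,Y)`, `e' = (Y,Z)` of the coarse graph and every
`y ∈ bd_e(Y)` there exists `y' ∈ bd_{e'}(Y)` in the same strongly connected
component of `G` as `y`. Then the pair of the coarse graph and the distribution is
σ-faithful and the coarse graph is acyclic. -/
theorem faithfulness_criterion_one {Ω V I : Type} [MeasurableSpace Ω]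
    [StandardBorelSpace Ω] [Fintype V] (μ : Measure Ω) [IsProbabilityMeasure μ]
    (X : V → Ω → ℝ) (hX : ∀ v, Measurable (X v)) (hpos : HasPositiveDensity μ X)
    (G : MixedGraph V) (hDMG : G.IsDMG)
    (q : V → I) (hq : Function.Surjective q)
    (h1 : SigmaMarkov G μ X ∧ SigmaFaithful G μ X)
    (h2 : ∀ a b, G.Strongly a b → q a = q b)
    (h3 : ∀ e e' : Step I, Step.ok (G.coarse q) e → Step.ok (G.coarse q) e' →
      e.b = e'.a → ∀ y ∈ bdEnd G q e, ∃ y' ∈ bdStart G q e', G.Strongly y y') :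
    SigmaFaithfulGrp G q μ X ∧ (G.coarse q).Acyclic := by
  classical
  have hac : (G.coarse q).Acyclic := coarse_acyclic h2 h3
  refine ⟨?_, hac⟩
  intro Y Z S hCI L hwL
  by_contra hnb
  obtain ⟨hYS, hZS, hcp⟩ := coarse_pairs hDMG hac hwL hnb
  cases hwL with
  | nil =>
    obtain ⟨a, ha⟩ := hq Y
    have hCI' : GroupCI μ X {a} {a} (q ⁻¹' S) :=
      GroupCI_mono (Set.singleton_subset_iff.2 (by simp [ha]))
        (Set.singleton_subset_iff.2 (by simp [ha])) hCI
    have hblock := h1.2 a a _ hCI' ([]) (IsWalk.nil a)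
    rcases hblock with h | h | ⟨i, v, ⟨s, t, hgs, -⟩, -⟩ | ⟨i, s, t, hgs, -⟩
    · exact hYS (ha ▸ Set.mem_preimage.1 h)
    · exact hYS (ha ▸ Set.mem_preimage.1 h)
    · simp at hgs
    · simp at hgs
  | cons E L' hokE hw' =>
    obtain ⟨a, z0, hqa, hqz0, hok0⟩ := coarse_ok_micro hDMG hokE
    have hz0 : z0 ∈ bdEnd G q E := ⟨hqz0, a, hqa, hok0⟩
    obtain ⟨b, Lm, hqb, hwm, hbT, hadj, hhd⟩ :=
      lift_walk hDMG h2 h3 hw' hZS E z0 hokE rfl hz0 hcp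
    have hwalk : G.IsWalk a b (⟨a, z0, E.k⟩ :: Lm) := IsWalk.cons _ _ hok0 hwm
    have hCI' : GroupCI μ X {a} {b} (q ⁻¹' S) :=
      GroupCI_mono (Set.singleton_subset_iff.2 (by simp [hqa]))
        (Set.singleton_subset_iff.2 (by simp [hqb])) hCI
    have hblock := h1.2 a b _ hCI' _ hwalk
    refine not_sigmaBlocked ?_ hbT ?_ hblock
    · intro hT
      exact hYS (hqa ▸ Set.mem_preimage.1 hT)
    · intro s t ha'
      rcases adjP_cons.1 ha' with ⟨rfl, hh⟩ | h
      · exact (hhd t hh).2 a hqa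
      · exact hadj s t h
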